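/- arXiv:1009.4243 — 5 statements merged into one kernel-verified Lean document; each statement's English description precedes it below -/
import Mathlib

section
/- In the setting of the construction Γ̃ from a complex Γ with covering subcomplexes Γ₁,…,Γ_m and new vertices y₁,…,y_m, the matching on the Hasse diagram of Γ̃ defined as follows is a complete acyclic matching: for each face σ ∈ Γ with Y_σ = { y_j : σ ∈ Γ_j } nonempty, letting j be minimal with y_j ∈ Y_σ, match σ ∪ τ with σ ∪ τ ∪ {y_j} for every τ ⊆ Y_σ with y_j ∉ τ. -/
/-- An (abstract) simplicial complex on a vertex type `V`. -/
structure SComplex (V : Type*) where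
  faces : Set (Finset V)
  down_closed : ∀ {F G : Finset V}, F ∈ faces → G ⊆ F → G ∈ faces

variable {V : Type*} [DecidableEq V] {m : ℕ}

/-- The face set of `Γ̃`: all sets `σ ∪ τ` with `σ ∈ Γ`, `τ ⊆ Y_σ = {y_j : σ ∈ Γ_j}`,
where the new vertex `y_j` is coded as `Sum.inr j`. -/
def tildeFaces (Γ : SComplex V) (Γs : Fin m → SComplex V) :
    Set (Finset (V ⊕ Fin m)) :=
  {S | ∃ σ ∈ Γ.faces, ∃ τ : Finset (Fin m), (∀ j ∈ τ, σ ∈ (Γs j).faces) ∧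
    S = σ.image Sum.inl ∪ τ.image Sum.inr}

/-- The `x`-part of a face of `Γ̃`. -/
noncomputable def sigmaPart (F : Finset (V ⊕ Fin m)) : Finset V :=
  F.preimage Sum.inl Sum.inl_injective.injOn

/-- The matching: `F` and `F'` are matched iff they differ exactly by the vertex
`y_{j₀}`, where `j₀` is the least index with `σ_F ∈ Γ_{j₀}` (so `y_{j₀}` is the least
element of `Y_{σ_F}`). -/
def Matched (Γs : Fin m → SComplex V) (F F' : Finset (V ⊕ Fin m)) : Prop :=
  ∃ j₀ : Fin m,
    (sigmaPart F ∈ (Γs j₀).faces ∧ ∀ j, sigmaPart F ∈ (Γs j).faces → j₀ ≤ j) ∧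
    ((Sum.inr j₀ ∉ F ∧ F' = insert (Sum.inr j₀) F) ∨
      (Sum.inr j₀ ∉ F' ∧ F = insert (Sum.inr j₀) F'))

/-- One step of the modified Hasse diagram of `Γ̃`: matched edges are oriented
upward (towards the larger face) and all other Hasse edges downward. -/
def HasseStep (Γ : SComplex V) (Γs : Fin m → SComplex V)
    (F F' : Finset (V ⊕ Fin m)) : Prop :=
  F ∈ tildeFaces Γ Γs ∧ F' ∈ tildeFaces Γ Γs ∧
    (((∃ w ∉ F, F' = insert w F) ∧ Matched Γs F F') ∨
      ((∃ w ∉ F', F = insert w F') ∧ ¬ Matched Γs F F'))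

namespace MatchAux

variable {V : Type*} [DecidableEq V] {m : ℕ}

noncomputable def tauPart (F : Finset (V ⊕ Fin m)) : Finset (Fin m) :=
  F.preimage Sum.inr Sum.inr_injective.injOn

@[simp] lemma mem_sigmaPart {F : Finset (V ⊕ Fin m)} {v : V} :
    v ∈ sigmaPart F ↔ Sum.inl v ∈ F := Finset.mem_preimage

@[simp] lemma mem_tauPart {F : Finset (V ⊕ Fin m)} {j : Fin m} :
    j ∈ tauPart F ↔ Sum.inr j ∈ F := Finset.mem_preimage

lemma sigmaPart_insert_inr (F : Finset (V ⊕ Fin m)) (j : Fin m) :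
    sigmaPart (insert (Sum.inr j) F) = sigmaPart F := by
  ext v; simp

lemma tauPart_insert_inr (F : Finset (V ⊕ Fin m)) (j : Fin m) :
    tauPart (insert (Sum.inr j) F) = insert j (tauPart F) := by
  ext i; simp

lemma decomp (F : Finset (V ⊕ Fin m)) :
    F = (sigmaPart F).image Sum.inl ∪ (tauPart F).image Sum.inr := by
  ext x
  cases x with
  | inl v => simp
  | inr j => simp

lemma sigmaPart_rep (σ : Finset V) (τ : Finset (Fin m)) :
    sigmaPart (σ.image Sum.inl ∪ τ.image Sum.inr) = σ := by
  ext v; simp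

lemma tauPart_rep (σ : Finset V) (τ : Finset (Fin m)) :
    tauPart (σ.image Sum.inl ∪ τ.image Sum.inr) = τ := by
  ext j; simp

lemma mem_tilde_iff {Γ : SComplex V} {Γs : Fin m → SComplex V}
    {F : Finset (V ⊕ Fin m)} :
    F ∈ tildeFaces Γ Γs ↔
      sigmaPart F ∈ Γ.faces ∧ ∀ j ∈ tauPart F, sigmaPart F ∈ (Γs j).faces := by
  constructor
  · rintro ⟨σ, hσ, τ, hτ, rfl⟩
    rw [sigmaPart_rep, tauPart_rep]
    exact ⟨hσ, hτ⟩
  · rintro ⟨h1, h2⟩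
    exact ⟨sigmaPart F, h1, tauPart F, h2, decomp F⟩

lemma exists_least (Γs : Fin m → SComplex V) {σ : Finset V}
    (h : ∃ j, σ ∈ (Γs j).faces) :
    ∃ j₀ : Fin m, σ ∈ (Γs j₀).faces ∧ ∀ j, σ ∈ (Γs j).faces → j₀ ≤ j := by
  classical
  obtain ⟨j, hj⟩ := h
  set S : Set ℕ := {n | ∃ hn : n < m, σ ∈ (Γs ⟨n, hn⟩).faces} with hS
  have hne : S.Nonempty := ⟨j.1, j.2, by simpa using hj⟩
  obtain ⟨hlt, hmem⟩ := Nat.sInf_mem hne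
  refine ⟨⟨sInf S, hlt⟩, hmem, ?_⟩
  intro i hi
  exact Nat.sInf_le ⟨i.2, by simpa using hi⟩

/-- value of the least index, as a natural number. -/
noncomputable def jN (Γs : Fin m → SComplex V) (σ : Finset V) : ℕ :=
  sInf {n | ∃ hn : n < m, σ ∈ (Γs ⟨n, hn⟩).faces}

lemma jN_eq (Γs : Fin m → SComplex V) {σ : Finset V} {j₀ : Fin m}
    (h1 : σ ∈ (Γs j₀).faces) (h2 : ∀ j, σ ∈ (Γs j).faces → j₀ ≤ j) :
    jN Γs σ = (j₀ : ℕ) := by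
  have hle : jN Γs σ ≤ (j₀ : ℕ) := Nat.sInf_le ⟨j₀.2, by simpa using h1⟩
  have hne : {n | ∃ hn : n < m, σ ∈ (Γs ⟨n, hn⟩).faces}.Nonempty :=
    ⟨j₀.1, j₀.2, by simpa using h1⟩
  obtain ⟨hlt, hmem⟩ := Nat.sInf_mem hne
  exact le_antisymm hle (h2 ⟨_, hlt⟩ hmem)

open Classical in
/-- A measure strictly decreasing along every `HasseStep`. -/
noncomputable def meas (Γs : Fin m → SComplex V) (F : Finset (V ⊕ Fin m)) : ℕ :=
  (sigmaPart F).card * (2 * m + 2)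
    + 2 * ((tauPart F).filter (fun j : Fin m => (j : ℕ) ≠ jN Γs (sigmaPart F))).card
    + (if jN Γs (sigmaPart F) ∈ (tauPart F).image Fin.val then 0 else 1)

lemma meas_lt {Γ : SComplex V} {Γs : Fin m → SComplex V}
    {F F' : Finset (V ⊕ Fin m)} (h : HasseStep Γ Γs F F') :
    meas Γs F' < meas Γs F := by
  classical
  obtain ⟨hF, hF', hstep⟩ := h
  rcases hstep with ⟨⟨w, hw, hFw⟩, hM⟩ | ⟨⟨w, hw, hFw⟩, hM⟩
  · -- up step
    obtain ⟨j₀, ⟨hj1, hj2⟩, hcase⟩ := hM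
    rcases hcase with ⟨hnin, rfl⟩ | ⟨hnin, heq⟩
    · -- F' = insert (inr j₀) F
      have hσ : sigmaPart (insert (Sum.inr j₀) F) = sigmaPart F :=
        sigmaPart_insert_inr F j₀
      have hτ : tauPart (insert (Sum.inr j₀) F) = insert j₀ (tauPart F) :=
        tauPart_insert_inr F j₀
      have hjN : jN Γs (sigmaPart F) = (j₀ : ℕ) := jN_eq Γs hj1 hj2
      have hj₀τ : j₀ ∉ tauPart F := by simpa using hnin
      unfold meas
      rw [hσ, hτ, hjN]
      have hfil : (insert j₀ (tauPart F)).filter (fun j : Fin m => (j : ℕ) ≠ (j₀ : ℕ))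
          = (tauPart F).filter (fun j : Fin m => (j : ℕ) ≠ (j₀ : ℕ)) := by
        rw [Finset.filter_insert]
        simp
      rw [hfil]
      have h1 : (j₀ : ℕ) ∈ (insert j₀ (tauPart F)).image Fin.val := by
        simp
      have h2 : (j₀ : ℕ) ∉ (tauPart F).image Fin.val := by
        simp only [Finset.mem_image]
        rintro ⟨i, hi, hiv⟩
        exact hj₀τ (by rwa [Fin.val_injective hiv] at hi)
      rw [if_pos h1, if_neg h2]
      linarith
    · -- contradictory: F = insert (inr j₀) F' and F' = insert w F
      exfalso
      have hwF' : w ∈ F' := hFw ▸ Finset.mem_insert_self _ _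
      have hsub : F' ⊆ F := heq ▸ Finset.subset_insert _ _
      exact hw (hsub hwF')
  · -- down step : F = insert w F', w ∉ F'
    subst hFw
    -- existence of least index for sigmaPart F
    cases w with
    | inl v =>
      -- sigma part strictly shrinks
      have hσ : sigmaPart (insert (Sum.inl v) F') = insert v (sigmaPart F') := by
        ext u; simp
      have hv : v ∉ sigmaPart F' := by simpa using hw
      have hcard : (sigmaPart (insert (Sum.inl v) F')).card
          = (sigmaPart F').card + 1 := by
        rw [hσ, Finset.card_insert_of_notMem hv]
      have hbound : ((tauPart F').filter
          (fun j : Fin m => (j : ℕ) ≠ jN Γs (sigmaPart F'))).card ≤ m :=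
        calc _ ≤ (tauPart F').card := Finset.card_filter_le _ _
          _ ≤ Fintype.card (Fin m) := Finset.card_le_univ _
          _ = m := Fintype.card_fin m
      have hind : (if jN Γs (sigmaPart F') ∈ (tauPart F').image Fin.val then 0 else 1) ≤ 1 := by
        split <;> omega
      have hA : meas Γs F' < ((sigmaPart F').card + 1) * (2 * m + 2) := by
        unfold meas
        nlinarith [hbound, hind]
      have hB : ((sigmaPart F').card + 1) * (2 * m + 2)
          ≤ meas Γs (insert (Sum.inl v) F') := by
        unfold meas
        rw [hcard]
        exact (Nat.le_add_right _ _).trans (Nat.le_add_right _ _)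
      exact lt_of_lt_of_le hA hB
    | inr j =>
      have hσ : sigmaPart (insert (Sum.inr j) F') = sigmaPart F' :=
        sigmaPart_insert_inr F' j
      have hτ : tauPart (insert (Sum.inr j) F') = insert j (tauPart F') :=
        tauPart_insert_inr F' j
      -- sigmaPart F' ∈ Γs j since inr j ∈ F
      have hjmem : sigmaPart F' ∈ (Γs j).faces := by
        have := (mem_tilde_iff.mp hF).2 j (by simp [hτ])
        rwa [hσ] at this
      obtain ⟨j₀, hj1, hj2⟩ := exists_least Γs ⟨j, hjmem⟩
      have hjne : j ≠ j₀ := by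
        intro hjj
        subst hjj
        exact hM ⟨j, ⟨by rwa [hσ], by rw [hσ]; exact hj2⟩,
          Or.inr ⟨by simpa using hw, rfl⟩⟩
      have hjτ : j ∉ tauPart F' := by simpa using hw
      have hjN : jN Γs (sigmaPart F') = (j₀ : ℕ) := jN_eq Γs hj1 hj2
      unfold meas
      rw [hσ, hτ, hjN]
      have hfil : (insert j (tauPart F')).filter (fun i : Fin m => (i : ℕ) ≠ (j₀ : ℕ))
          = insert j ((tauPart F').filter (fun i : Fin m => (i : ℕ) ≠ (j₀ : ℕ))) := by
        rw [Finset.filter_insert,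
          if_pos (fun h => hjne (Fin.val_injective h))]
      have hjτf : j ∉ (tauPart F').filter (fun i : Fin m => (i : ℕ) ≠ (j₀ : ℕ)) := by
        simp [hjτ]
      rw [hfil, Finset.card_insert_of_notMem hjτf]
      have himg : ((j₀ : ℕ) ∈ (insert j (tauPart F')).image Fin.val)
          ↔ ((j₀ : ℕ) ∈ (tauPart F').image Fin.val) := by
        simp only [Finset.image_insert, Finset.mem_insert]
        constructor
        · rintro (h | h)
          · exact absurd (Fin.val_injective h.symm) hjne
          · exact h
        · exact Or.inr
      rcases Classical.em ((j₀ : ℕ) ∈ (tauPart F').image Fin.val) with hin | hin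
      · rw [if_pos (himg.mpr hin), if_pos hin]; linarith
      · rw [if_neg (fun hh => hin (himg.mp hh)), if_neg hin]; linarith

end MatchAux
/-- The matching described above is a complete acyclic matching on
the (modified) Hasse diagram of `Γ̃`: it is a genuine matching (partners are unique
and are faces of `Γ̃`), every face of `Γ̃` is matched, and the modified Hasse diagram
has no directed cycles. -/
theorem matching_is_complete_and_acyclic
    (Γ : SComplex V) (Γs : Fin m → SComplex V)
    (hsub : ∀ j, (Γs j).faces ⊆ Γ.faces)
    (hcover : Γ.faces = ⋃ j, (Γs j).faces) :
    (∀ F F₁ F₂, F ∈ tildeFaces Γ Γs →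
        Matched Γs F F₁ → Matched Γs F F₂ → F₁ = F₂) ∧
    (∀ F F', F ∈ tildeFaces Γ Γs → Matched Γs F F' → F' ∈ tildeFaces Γ Γs) ∧
    (∀ F ∈ tildeFaces Γ Γs, ∃ F', Matched Γs F F') ∧
    (∀ F, ¬ Relation.TransGen (HasseStep Γ Γs) F F) := by
  classical
  open MatchAux in
  refine ⟨?_, ?_, ?_, ?_⟩
  · -- uniqueness
    rintro F F₁ F₂ hF ⟨j₁, ⟨hm1, hl1⟩, hc1⟩ ⟨j₂, ⟨hm2, hl2⟩, hc2⟩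
    have hjj : j₁ = j₂ := le_antisymm (hl1 j₂ hm2) (hl2 j₁ hm1)
    subst hjj
    rcases hc1 with ⟨hn1, rfl⟩ | ⟨hn1, he1⟩ <;>
      rcases hc2 with ⟨hn2, rfl⟩ | ⟨hn2, he2⟩
    · rfl
    · exact absurd (he2 ▸ Finset.mem_insert_self _ _) hn1
    · exact absurd (he1 ▸ Finset.mem_insert_self _ _) hn2
    · rw [he1] at he2
      rw [← Finset.erase_insert hn1, he2, Finset.erase_insert hn2]
  · -- partner in tildeFaces
    rintro F F' hF ⟨j₀, ⟨hm, hl⟩, hc⟩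
    obtain ⟨hσ, hτ⟩ := MatchAux.mem_tilde_iff.mp hF
    rcases hc with ⟨hn, rfl⟩ | ⟨hn, he⟩
    · refine MatchAux.mem_tilde_iff.mpr ?_
      rw [MatchAux.sigmaPart_insert_inr, MatchAux.tauPart_insert_inr]
      refine ⟨hσ, ?_⟩
      intro j hj
      rcases Finset.mem_insert.mp hj with rfl | hj
      · exact hm
      · exact hτ j hj
    · subst he
      rw [MatchAux.sigmaPart_insert_inr] at hσ hτ
      rw [MatchAux.tauPart_insert_inr] at hτ
      refine MatchAux.mem_tilde_iff.mpr ⟨hσ, fun j hj => hτ j (Finset.mem_insert_of_mem hj)⟩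
  · -- completeness
    intro F hF
    obtain ⟨hσ, hτ⟩ := MatchAux.mem_tilde_iff.mp hF
    have : ∃ j, sigmaPart F ∈ (Γs j).faces := by
      rw [hcover] at hσ
      simpa using hσ
    obtain ⟨j₀, hj1, hj2⟩ := MatchAux.exists_least Γs this
    by_cases hmem : Sum.inr j₀ ∈ F
    · exact ⟨F.erase (Sum.inr j₀), j₀, ⟨hj1, hj2⟩,
        Or.inr ⟨Finset.notMem_erase _ _, (Finset.insert_erase hmem).symm⟩⟩
    · exact ⟨insert (Sum.inr j₀) F, j₀, ⟨hj1, hj2⟩, Or.inl ⟨hmem, rfl⟩⟩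
  · -- acyclicity
    intro F hcyc
    have key : ∀ {a b : Finset (V ⊕ Fin m)},
        Relation.TransGen (HasseStep Γ Γs) a b →
        MatchAux.meas Γs b < MatchAux.meas Γs a := by
      intro a b h
      induction h with
      | single h => exact MatchAux.meas_lt h
      | tail _ h ih => exact (MatchAux.meas_lt h).trans ih
    exact absurd (key hcyc) (lt_irrefl _)
end

section
/- Let Γ be a simplicial complex on V₁ = {x₁,…,x_n} and let G₁,…,G_m ⊆ V₁ be such that each V₁ \ G_j is a face of Γ and every facet of Γ has the form V₁ \ G_j. Let Δ be the complex on V₁ ∪ {y₁,…,y_m} whose faces are all σ ∪ τ with σ ∈ Γ and τ ⊆ { y_j : σ ⊆ V₁ \ G_j }, together with all subsets of V₁. Then the minimal nonfaces of Δ are exactly the pairs {x_i, y_j} with 1 ≤ j ≤ m and x_i ∈ G_j. -/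
variable {V : Type*} [Fintype V] [DecidableEq V] {m : ℕ}

/-- The face set of the complex `Δ` of Construction 3.2: all sets `σ ∪ τ` with
`σ ∈ Γ` and `τ ⊆ {y_j : σ ⊆ V₁ \ G_j}` (the new vertex `y_j` is `Sum.inr j`),
together with all subsets of `V₁`. -/
def deltaFaces (Γ : SComplex V) (G : Fin m → Finset V) :
    Set (Finset (V ⊕ Fin m)) :=
  {S | ∃ σ ∈ Γ.faces, ∃ τ : Finset (Fin m), (∀ j ∈ τ, Disjoint σ (G j)) ∧
      S = σ.image Sum.inl ∪ τ.image Sum.inr} ∪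
  {S | ∃ σ : Finset V, S = σ.image Sum.inl}

lemma eq_toLeft_union_toRight (S : Finset (V ⊕ Fin m)) :
    S = S.toLeft.image Sum.inl ∪ S.toRight.image Sum.inr := by
  ext a
  rcases a with x | j <;> simp

lemma pair_not_face (Γ : SComplex V) (G : Fin m → Finset V) {x : V} {j : Fin m}
    (hx : x ∈ G j) : ({Sum.inl x, Sum.inr j} : Finset (V ⊕ Fin m)) ∉ deltaFaces Γ G := by
  rintro (⟨σ, hσ, τ, hdisj, heq⟩ | ⟨σ, heq⟩)
  · have hxσ : x ∈ σ := by
      have : (Sum.inl x : V ⊕ Fin m) ∈ σ.image Sum.inl ∪ τ.image Sum.inr := by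
        rw [← heq]; simp
      simpa using this
    have hjτ : j ∈ τ := by
      have : (Sum.inr j : V ⊕ Fin m) ∈ σ.image Sum.inl ∪ τ.image Sum.inr := by
        rw [← heq]; simp
      simpa using this
    exact Finset.disjoint_left.mp (hdisj j hjτ) hxσ hx
  · have : (Sum.inr j : V ⊕ Fin m) ∈ σ.image Sum.inl := by rw [← heq]; simp
    simp at this

/-- If every `V₁ \ G_j` is a face of `Γ` and every facet of `Γ` is of
the form `V₁ \ G_j`, then the minimal nonfaces of `Δ` are exactly the pairs
`{x_i, y_j}` with `x_i ∈ G_j`. -/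
theorem minimal_nonfaces_of_delta
    (Γ : SComplex V) (G : Fin m → Finset V)
    (hempty : ∅ ∈ Γ.faces)
    (hface : ∀ j, Finset.univ \ G j ∈ Γ.faces)
    (hfacet : ∀ F ∈ Γ.faces, (∀ F' ∈ Γ.faces, F ⊆ F' → F' = F) →
      ∃ j, F = Finset.univ \ G j) :
    {S : Finset (V ⊕ Fin m) | S ∉ deltaFaces Γ G ∧
        ∀ T ⊂ S, T ∈ deltaFaces Γ G} =
      {S | ∃ j, ∃ x ∈ G j, S = {Sum.inl x, Sum.inr j}} := by
  ext S
  simp only [Set.mem_setOf_eq]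
  constructor
  · rintro ⟨hnf, hmin⟩
    have hS := eq_toLeft_union_toRight S
    have hτne : S.toRight.Nonempty := by
      by_contra h
      rw [Finset.not_nonempty_iff_eq_empty] at h
      refine hnf (Or.inr ⟨S.toLeft, ?_⟩)
      conv_lhs => rw [hS, h]
      simp
    have hσne : S.toLeft.Nonempty := by
      by_contra h
      rw [Finset.not_nonempty_iff_eq_empty] at h
      refine hnf (Or.inl ⟨∅, hempty, S.toRight, fun j _ => by simp, ?_⟩)
      conv_lhs => rw [hS, h]
    have hkey : ∃ j ∈ S.toRight, ∃ x ∈ S.toLeft, x ∈ G j := by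
      by_contra h
      push_neg at h
      obtain ⟨j₀, hj₀⟩ := hτne
      have hdisj : ∀ j ∈ S.toRight, Disjoint S.toLeft (G j) := fun j hj =>
        Finset.disjoint_left.mpr (fun x hxσ hxG => h j hj x hxσ hxG)
      have hσΓ : S.toLeft ∈ Γ.faces := by
        apply Γ.down_closed (hface j₀)
        rw [Finset.subset_sdiff]
        exact ⟨Finset.subset_univ _, hdisj j₀ hj₀⟩
      exact hnf (Or.inl ⟨S.toLeft, hσΓ, S.toRight, hdisj, hS⟩)
    obtain ⟨j, hjτ, x, hxσ, hxG⟩ := hkey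
    refine ⟨j, x, hxG, ?_⟩
    have hsub : ({Sum.inl x, Sum.inr j} : Finset (V ⊕ Fin m)) ⊆ S := by
      intro a ha
      simp only [Finset.mem_insert, Finset.mem_singleton] at ha
      rcases ha with rfl | rfl
      · exact Finset.mem_toLeft.mp hxσ
      · exact Finset.mem_toRight.mp hjτ
    by_contra hne
    exact pair_not_face Γ G hxG (hmin _ (hsub.ssubset_of_ne (fun h => hne h.symm)))
  · rintro ⟨j, x, hxG, rfl⟩
    refine ⟨pair_not_face Γ G hxG, ?_⟩
    intro T hT
    have hsub := hT.subset
    by_cases h1 : (Sum.inl x : V ⊕ Fin m) ∈ T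
    · by_cases h2 : (Sum.inr j : V ⊕ Fin m) ∈ T
      · refine absurd (Finset.Subset.antisymm hsub ?_) hT.ne
        intro a ha
        simp only [Finset.mem_insert, Finset.mem_singleton] at ha
        rcases ha with rfl | rfl <;> assumption
      · have hT1 : T ⊆ {Sum.inl x} := by
          intro a ha
          have h := hsub ha
          simp only [Finset.mem_insert, Finset.mem_singleton] at h ⊢
          rcases h with h | h
          · exact h
          · exact absurd (h ▸ ha) h2
        rcases Finset.subset_singleton_iff.mp hT1 with h | h
        · exact Or.inr ⟨∅, by simp [h]⟩
        · exact Or.inr ⟨{x}, by simp [h]⟩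
    · have hT1 : T ⊆ {Sum.inr j} := by
        intro a ha
        have h := hsub ha
        simp only [Finset.mem_insert, Finset.mem_singleton] at h ⊢
        rcases h with h | h
        · exact absurd (h ▸ ha) h1
        · exact h
      rcases Finset.subset_singleton_iff.mp hT1 with h | h
      · exact Or.inr ⟨∅, by simp [h]⟩
      · exact Or.inl ⟨∅, hempty, {j}, fun _ _ => by simp, by simp [h]⟩
end

section
/- Let Δ be the Stanley–Reisner complex of a squarefree monomial ideal I in k[V], and suppose I = (J, y₁⋯y_t) minimally with t ≥ 2, where every generator of I divisible by y₂ is also divisible by y₁ (e.g. I is a polarization of an ideal (J₀, x₁^t)). Then for any subset τ ⊆ V containing {y₁,…,y_t}, the deletion del_{Δ|_τ}(y₁) is a cone over y₂; in particular del_{Δ|_τ}(y₁) has vanishing reduced homology, and hence H̃_{i+1}(Δ|_τ; ℤ) ≅ H̃_i(link_{Δ|_τ}(y₁); ℤ) for all i ≥ 0. -/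
set_option maxHeartbeats 1000000


namespace SComplex

variable {V : Type*} [DecidableEq V]

/-- The deletion of a vertex `x`: the restriction of `K` to the other vertices. -/
def del (K : SComplex V) (x : V) : SComplex V where
  faces := {F | F ∈ K.faces ∧ x ∉ F}
  down_closed := fun hF hG => ⟨K.down_closed hF.1 hG, fun hx => hF.2 (hG hx)⟩

/-- The link of a vertex `x`. -/
def link (K : SComplex V) (x : V) : SComplex V where
  faces := {F | F ∈ K.faces ∧ x ∉ F ∧ insert x F ∈ K.faces}
  down_closed := fun hF hG =>
    ⟨K.down_closed hF.1 hG, fun hx => hF.2.1 (hG hx),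
      K.down_closed hF.2.2 (Finset.insert_subset_insert _ hG)⟩

/-- The restriction `K|_τ` of `K` to a subset `τ` of the vertices. -/
def restrict (K : SComplex V) (τ : Finset V) : SComplex V where
  faces := {F | F ∈ K.faces ∧ F ⊆ τ}
  down_closed := fun hF hG => ⟨K.down_closed hF.1 hG, hG.trans hF.2⟩

/-- A complex is a cone over the vertex `y` if adjoining `y` to any face gives a face. -/
def IsConeWithApex (K : SComplex V) (y : V) : Prop :=
  ∀ F ∈ K.faces, insert y F ∈ K.faces

end SComplex

/-- The Stanley–Reisner complex of the squarefree monomial ideal whose minimal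
generators correspond to the finite sets in `Gens`. -/
def SRcomplex {V : Type*} (Gens : Finset (Finset V)) : SComplex V where
  faces := {F | ∀ g ∈ Gens, ¬ g ⊆ F}
  down_closed := fun hF hG g hg hsub => hF g hg (hsub.trans hG)

section Homology

variable {V : Type*} [LinearOrder V]

/-- Reduced `ℤ`-chains: the free abelian group on faces of cardinality `k`. -/
abbrev SComplex.Chains (K : SComplex V) (k : ℕ) : Type _ :=
  {F : Finset V // F ∈ K.faces ∧ F.card = k} →₀ ℤ

/-- The simplicial boundary map, with signs from the linear order on `V`. -/
noncomputable def SComplex.bdry (K : SComplex V) (k : ℕ) :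
    K.Chains (k + 1) →ₗ[ℤ] K.Chains k :=
  Finsupp.lsum ℤ fun F => LinearMap.toSpanSingleton ℤ (K.Chains k)
    (∑ x ∈ F.1.attach,
      ((-1 : ℤ) ^ (List.idxOf x.1 (F.1.sort (· ≤ ·)))) •
        Finsupp.single ⟨F.1.erase x.1,
          K.down_closed F.2.1 (Finset.erase_subset _ _), by
            simp [Finset.card_erase_of_mem x.2, F.2.2]⟩ 1)

/-- The `i`-th reduced simplicial homology with integer coefficients. -/
noncomputable def SComplex.reducedHomology (K : SComplex V) (i : ℕ) : Type _ :=
  LinearMap.ker (K.bdry i) ⧸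
    (LinearMap.range (K.bdry (i + 1))).comap (LinearMap.ker (K.bdry i)).subtype

noncomputable instance (K : SComplex V) (i : ℕ) : AddCommGroup (K.reducedHomology i) :=
  inferInstanceAs (AddCommGroup
    (LinearMap.ker (K.bdry i) ⧸
      (LinearMap.range (K.bdry (i + 1))).comap (LinearMap.ker (K.bdry i)).subtype))

noncomputable instance (K : SComplex V) (i : ℕ) : Module ℤ (K.reducedHomology i) :=
  inferInstanceAs (Module ℤ
    (LinearMap.ker (K.bdry i) ⧸
      (LinearMap.range (K.bdry (i + 1))).comap (LinearMap.ker (K.bdry i)).subtype))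

end Homology

namespace SRproof
variable {V : Type*} [LinearOrder V]


/-- Sign of `x` in the face `F`. -/
def sgn (F : Finset V) (x : V) : ℤ := (-1) ^ ((F.filter (· < x)).card)

theorem list_indexOf_sorted {x : V} : ∀ (l : List V), l.Pairwise (· < ·) → x ∈ l →
    l.idxOf x = (l.filter (fun z => z < x)).length := by
  intro l
  induction l with
  | nil => simp
  | cons a t ih =>
    intro hs hm
    rcases eq_or_ne x a with rfl | hne
    · rw [List.idxOf_cons_self]
      have : ∀ z ∈ t, ¬ z < x := fun z hz => not_lt.2 (le_of_lt ((List.pairwise_cons.1 hs).1 z hz))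
      simp only [List.filter_cons]
      rw [if_neg (by simp), List.filter_eq_nil_iff.2 (by simpa using this)]
      rfl
    · have hxt : x ∈ t := by rcases List.mem_cons.1 hm with h | h; exact absurd h hne; exact h
      have hax : a < x := (List.pairwise_cons.1 hs).1 x hxt
      rw [List.idxOf_cons_ne _ (fun h => hne h.symm), List.filter_cons, if_pos (by simpa using hax)]
      simp [ih (List.pairwise_cons.1 hs).2 hxt]

theorem indexOf_sort (F : Finset V) {x : V} (hx : x ∈ F) :
    (F.sort (· ≤ ·)).idxOf x = (F.filter (· < x)).card := by
  rw [list_indexOf_sorted _ (Finset.sortedLT_sort F).pairwise (by simpa using hx)]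
  rw [List.Perm.length_eq ((Finset.sort_perm_toList F _).filter _)]
  simp only [Finset.toList, Finset.filter]
  exact (Multiset.coe_card _).symm.trans (by rw [← Multiset.filter_coe, Multiset.coe_toList]; rfl)

theorem sgn_sq (F : Finset V) (x : V) : sgn F x * sgn F x = 1 := by
  rw [sgn, ← pow_add, ← two_mul, pow_mul]; norm_num

@[simp] theorem sgn_mul_self (F : Finset V) (x : V) (c : ℤ) : sgn F x * (sgn F x * c) = c := by
  rw [← mul_assoc, sgn_sq, one_mul]

theorem sgn_insert {y : V} {S : Finset V} (hy : y ∉ S) {x : V} (hxy : x ≠ y) :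
    sgn (insert y S) x = (if y < x then -1 else 1) * sgn S x := by
  rw [sgn, sgn, Finset.filter_insert]
  split_ifs with h
  · rw [Finset.card_insert_of_notMem (fun hc => hy (Finset.mem_filter.1 hc).1), pow_succ, mul_comm]
  · rw [one_mul]

theorem sgn_insert_self {y : V} {S : Finset V} (hy : y ∉ S) :
    sgn (insert y S) y = (-1) ^ ((S.filter (· < y)).card) := by
  rw [sgn, Finset.filter_insert, if_neg (lt_irrefl y)]

/-- Key sign identity (i). -/
theorem sign_id_i {y : V} {S : Finset V} (hy : y ∉ S) {x : V} (hx : x ∈ S) :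
    sgn (insert y S) y * sgn (insert y S) x
      = - (sgn S x * sgn (insert y (S.erase x)) y) := by
  have hxy : x ≠ y := fun h => hy (h ▸ hx)
  rw [sgn_insert hy hxy, sgn_insert_self hy, sgn_insert_self (fun h => hy (Finset.erase_subset _ _ h))]
  have hS : S = insert x (S.erase x) := (Finset.insert_erase hx).symm
  have : ((S.filter (· < y)).card) = (((S.erase x).filter (· < y)).card) + (if x < y then 1 else 0) := by
    conv_lhs => rw [hS]
    rw [Finset.filter_insert]
    split_ifs with h
    · rw [Finset.card_insert_of_notMem (fun hc => (Finset.mem_erase.1 (Finset.mem_filter.1 hc).1).1 rfl)]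
    · rfl
  rw [this]
  rcases hxy.lt_or_gt with h | h
  · rw [if_pos h, if_neg (asymm h), pow_add]; ring
  · rw [if_neg (asymm h), if_pos h, pow_add]; ring

/-- Key sign identity (ii). -/
theorem sign_id_ii {y : V} {F : Finset V} (hy : y ∈ F) {x : V} (hx : x ∈ F) (hxy : x ≠ y) :
    sgn F x * sgn (F.erase x) y = - (sgn F y * sgn (F.erase y) x) := by
  have h1 : sgn F x = (if y < x then -1 else 1) * sgn (F.erase y) x := by
    conv_lhs => rw [← Finset.insert_erase hy]
    exact sgn_insert (Finset.notMem_erase _ _) hxy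
  have h2 : sgn F y = (if x < y then -1 else 1) * sgn (F.erase x) y := by
    conv_lhs => rw [← Finset.insert_erase hx]
    exact sgn_insert (Finset.notMem_erase _ _) (Ne.symm hxy)
  rw [h1, h2]
  rcases hxy.lt_or_gt with h | h
  · rw [if_neg (asymm h), if_pos h]; ring
  · rw [if_pos h, if_neg (asymm h)]; ring


open Classical in
noncomputable def bsingle (K : SComplex V) (k : ℕ) (F : Finset V) : K.Chains k :=
  if h : F ∈ K.faces ∧ F.card = k then Finsupp.single ⟨F, h⟩ 1 else 0

theorem bsingle_pos {K : SComplex V} {k : ℕ} {F : Finset V} (h : F ∈ K.faces ∧ F.card = k) :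
    bsingle K k F = Finsupp.single ⟨F, h⟩ 1 := by simp [bsingle, h.1, h.2]

theorem bsingle_neg {K : SComplex V} {k : ℕ} {F : Finset V} (h : ¬(F ∈ K.faces ∧ F.card = k)) :
    bsingle K k F = 0 := by simp only [bsingle]; rw [dif_neg h]

/-- generic basis-defined linear map -/
noncomputable def mkMap {K K' : SComplex V} {k k' : ℕ}
    (f : {F : Finset V // F ∈ K.faces ∧ F.card = k} → K'.Chains k') :
    K.Chains k →ₗ[ℤ] K'.Chains k' :=
  Finsupp.lsum ℤ fun F => LinearMap.toSpanSingleton ℤ _ (f F)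

@[simp] theorem mkMap_single {K K' : SComplex V} {k k' : ℕ}
    (f : {F : Finset V // F ∈ K.faces ∧ F.card = k} → K'.Chains k')
    (a : {F : Finset V // F ∈ K.faces ∧ F.card = k}) (c : ℤ) :
    mkMap f (Finsupp.single a c) = c • f a := by
  simp [mkMap]

theorem bdry_single (K : SComplex V) (k : ℕ) {F : Finset V} (h : F ∈ K.faces ∧ F.card = k + 1) :
    K.bdry k (Finsupp.single ⟨F, h⟩ 1) = ∑ x ∈ F, sgn F x • bsingle K k (F.erase x) := by
  rw [SComplex.bdry, Finsupp.lsum_single, LinearMap.toSpanSingleton_apply, one_smul]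
  rw [← Finset.sum_attach F (fun x => sgn F x • bsingle K k (F.erase x))]
  refine Finset.sum_congr rfl fun x _ => ?_
  rw [indexOf_sort F x.2, bsingle_pos ⟨K.down_closed h.1 (Finset.erase_subset _ _),
    by simp [Finset.card_erase_of_mem x.2, h.2]⟩]
  rfl

theorem bdry_bsingle (K : SComplex V) (k : ℕ) {F : Finset V} (h : F ∈ K.faces ∧ F.card = k + 1) :
    K.bdry k (bsingle K (k+1) F) = ∑ x ∈ F, sgn F x • bsingle K k (F.erase x) := by
  rw [bsingle_pos h, bdry_single K k h]

section ConeTheory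
variable (K : SComplex V) (y₁ y₂ : V)

theorem erase_mem_L {F : Finset V} (h : F ∈ K.faces) (hy : y₁ ∈ F) :
    F.erase y₁ ∈ (K.link y₁).faces :=
  ⟨K.down_closed h (Finset.erase_subset _ _), Finset.notMem_erase _ _,
    by rwa [Finset.insert_erase hy]⟩

/-- contracting homotopy of the deletion, via the cone apex `y₂` -/
noncomputable def hD (k : ℕ) : (K.del y₁).Chains k →ₗ[ℤ] (K.del y₁).Chains (k + 1) :=
  mkMap fun F => if y₂ ∈ F.1 then 0
    else sgn (insert y₂ F.1) y₂ • bsingle (K.del y₁) (k + 1) (insert y₂ F.1)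

noncomputable def jmap (k : ℕ) : (K.del y₁).Chains k →ₗ[ℤ] K.Chains k :=
  mkMap fun F => bsingle K k F.1

noncomputable def iota (k : ℕ) : (K.link y₁).Chains k →ₗ[ℤ] (K.del y₁).Chains k :=
  mkMap fun F => bsingle (K.del y₁) k F.1

noncomputable def sigmaM (k : ℕ) : (K.link y₁).Chains k →ₗ[ℤ] K.Chains (k + 1) :=
  mkMap fun F => sgn (insert y₁ F.1) y₁ • bsingle K (k + 1) (insert y₁ F.1)

noncomputable def piM (k : ℕ) : K.Chains (k + 1) →ₗ[ℤ] (K.link y₁).Chains k :=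
  mkMap fun F => if y₁ ∈ F.1 then sgn F.1 y₁ • bsingle (K.link y₁) k (F.1.erase y₁) else 0

noncomputable def rhoM (k : ℕ) : K.Chains k →ₗ[ℤ] (K.del y₁).Chains k :=
  mkMap fun F => if y₁ ∈ F.1 then 0 else bsingle (K.del y₁) k F.1

theorem hD_bsingle (k : ℕ) {F : Finset V} (hF : F ∈ (K.del y₁).faces ∧ F.card = k) :
    hD K y₁ y₂ k (bsingle (K.del y₁) k F)
      = if y₂ ∈ F then 0
        else sgn (insert y₂ F) y₂ • bsingle (K.del y₁) (k + 1) (insert y₂ F) := by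
  rw [bsingle_pos hF, hD, mkMap_single, one_smul]

theorem jmap_bsingle (k : ℕ) {F : Finset V} (hF : F ∈ (K.del y₁).faces ∧ F.card = k) :
    jmap K y₁ k (bsingle (K.del y₁) k F) = bsingle K k F := by
  rw [bsingle_pos hF, jmap, mkMap_single, one_smul]

theorem iota_bsingle (k : ℕ) {F : Finset V} (hF : F ∈ (K.link y₁).faces ∧ F.card = k) :
    iota K y₁ k (bsingle (K.link y₁) k F) = bsingle (K.del y₁) k F := by
  rw [bsingle_pos hF, iota, mkMap_single, one_smul]

theorem sigmaM_bsingle (k : ℕ) {F : Finset V} (hF : F ∈ (K.link y₁).faces ∧ F.card = k) :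
    sigmaM K y₁ k (bsingle (K.link y₁) k F)
      = sgn (insert y₁ F) y₁ • bsingle K (k + 1) (insert y₁ F) := by
  rw [bsingle_pos hF, sigmaM, mkMap_single, one_smul]

theorem piM_bsingle (k : ℕ) {F : Finset V} (hF : F ∈ K.faces ∧ F.card = k + 1) :
    piM K y₁ k (bsingle K (k + 1) F)
      = if y₁ ∈ F then sgn F y₁ • bsingle (K.link y₁) k (F.erase y₁) else 0 := by
  rw [bsingle_pos hF, piM, mkMap_single, one_smul]

theorem rhoM_bsingle (k : ℕ) {F : Finset V} (hF : F ∈ K.faces ∧ F.card = k) :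
    rhoM K y₁ k (bsingle K k F)
      = if y₁ ∈ F then 0 else bsingle (K.del y₁) k F := by
  rw [bsingle_pos hF, rhoM, mkMap_single, one_smul]

variable {y₂} in
/-- Identity (1): the contracting homotopy identity on the deletion. -/
theorem homotopy_id (hcone : (K.del y₁).IsConeWithApex y₂) (k : ℕ) :
    ((K.del y₁).bdry (k + 1)).comp (hD K y₁ y₂ (k + 1))
      + (hD K y₁ y₂ k).comp ((K.del y₁).bdry k) = LinearMap.id := by
  refine Finsupp.lhom_ext' fun a => LinearMap.ext_ring ?_
  obtain ⟨F, hF⟩ := a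
  have hFb : bsingle (K.del y₁) (k + 1) F = Finsupp.single ⟨F, hF⟩ 1 := bsingle_pos hF
  simp only [LinearMap.add_apply, LinearMap.comp_apply, LinearMap.id_apply, one_smul,
    LinearMap.smul_apply, Finsupp.lsingle_apply]
  rw [← hFb, hD_bsingle K y₁ y₂ _ hF, bdry_bsingle _ _ hF]
  by_cases hy : y₂ ∈ F
  · rw [if_pos hy, map_zero, zero_add, map_sum]
    have key : ∀ x ∈ F, (hD K y₁ y₂ k) (sgn F x • bsingle (K.del y₁) k (F.erase x))
        = if x = y₂ then bsingle (K.del y₁) (k+1) F else 0 := by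
      intro x hx
      have hface : F.erase x ∈ (K.del y₁).faces ∧ (F.erase x).card = k :=
        ⟨(K.del y₁).down_closed hF.1 (Finset.erase_subset _ _),
          by simp [Finset.card_erase_of_mem hx, hF.2]⟩
      rw [map_smul, hD_bsingle K y₁ y₂ _ hface]
      rcases eq_or_ne x y₂ with rfl | hne
      · rw [if_pos rfl, if_neg (Finset.notMem_erase _ _), Finset.insert_erase hy,
          smul_smul, sgn_sq, one_smul]
      · rw [if_neg hne, if_pos (Finset.mem_erase.2 ⟨Ne.symm hne, hy⟩), smul_zero]
    rw [Finset.sum_congr rfl key, Finset.sum_ite_eq' F y₂ (fun _ => bsingle (K.del y₁) (k+1) F),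
      if_pos hy]
  · -- y₂ ∉ F
    rw [if_neg hy]
    have hG : insert y₂ F ∈ (K.del y₁).faces ∧ (insert y₂ F).card = k + 1 + 1 :=
      ⟨hcone F hF.1, by rw [Finset.card_insert_of_notMem hy, hF.2]⟩
    rw [map_smul, bdry_bsingle _ _ hG, map_sum]
    have key2 : ∀ x ∈ F, (hD K y₁ y₂ k) (sgn F x • bsingle (K.del y₁) k (F.erase x))
        = (sgn F x * sgn (insert y₂ (F.erase x)) y₂) • bsingle (K.del y₁) (k+1)
            (insert y₂ (F.erase x)) := by
      intro x hx
      have hface : F.erase x ∈ (K.del y₁).faces ∧ (F.erase x).card = k :=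
        ⟨(K.del y₁).down_closed hF.1 (Finset.erase_subset _ _),
          by simp [Finset.card_erase_of_mem hx, hF.2]⟩
      rw [map_smul, hD_bsingle K y₁ y₂ _ hface,
        if_neg (fun hc => hy (Finset.erase_subset _ _ hc)), smul_smul]
    rw [Finset.sum_congr rfl key2, Finset.sum_insert hy, smul_add, smul_smul, sgn_sq, one_smul,
      Finset.erase_insert hy, Finset.smul_sum]
    rw [add_assoc, ← Finset.sum_add_distrib]
    have hzero : (∑ x ∈ F, (sgn (insert y₂ F) y₂ • (sgn (insert y₂ F) x •
          bsingle (K.del y₁) (k+1) ((insert y₂ F).erase x))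
        + (sgn F x * sgn (insert y₂ (F.erase x)) y₂) •
          bsingle (K.del y₁) (k+1) (insert y₂ (F.erase x)))) = 0 := by
      refine Finset.sum_eq_zero fun x hx => ?_
      have hxy : x ≠ y₂ := fun h => hy (h ▸ hx)
      rw [Finset.erase_insert_of_ne (Ne.symm hxy), smul_smul, sign_id_i hy hx, neg_smul, neg_add_cancel]
    rw [hzero, add_zero]
theorem lsingle_eq_bsingle {K : SComplex V} {k : ℕ} {F : Finset V}
    (hF : F ∈ K.faces ∧ F.card = k) :
    (Finsupp.lsingle (R := ℤ) (⟨F, hF⟩ : {F : Finset V // F ∈ K.faces ∧ F.card = k})) (1 : ℤ)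
      = bsingle K k F := by
  rw [Finsupp.lsingle_apply, bsingle_pos hF]

theorem erase_face {K : SComplex V} {k : ℕ} {F : Finset V} (hF : F ∈ K.faces ∧ F.card = k + 1)
    {x : V} (hx : x ∈ F) : F.erase x ∈ K.faces ∧ (F.erase x).card = k :=
  ⟨K.down_closed hF.1 (Finset.erase_subset _ _), by simp [Finset.card_erase_of_mem hx, hF.2]⟩

/-- Identity (2): `π` anti-commutes with the boundary. -/
theorem piM_bdry (K : SComplex V) (y₁ : V) (k : ℕ) :
    (piM K y₁ k).comp (K.bdry (k + 1))
      + ((K.link y₁).bdry k).comp (piM K y₁ (k + 1)) = 0 := by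
  refine Finsupp.lhom_ext' fun a => LinearMap.ext_ring ?_
  obtain ⟨F, hF⟩ := a
  simp only [LinearMap.add_apply, LinearMap.comp_apply, LinearMap.zero_apply,
    lsingle_eq_bsingle hF]
  rw [bdry_bsingle _ _ hF, piM_bsingle K y₁ _ hF, map_sum]
  by_cases hy : y₁ ∈ F
  · rw [if_pos hy, map_smul, bdry_bsingle _ _ ⟨erase_mem_L K y₁ hF.1 hy,
      by simp [Finset.card_erase_of_mem hy, hF.2]⟩]
    have key : ∀ x ∈ F, (piM K y₁ k) (sgn F x • bsingle K (k + 1) (F.erase x))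
        = if x = y₁ then 0 else
          (sgn F x * sgn (F.erase x) y₁) • bsingle (K.link y₁) k ((F.erase x).erase y₁) := by
      intro x hx
      rw [map_smul, piM_bsingle K y₁ _ (erase_face hF hx)]
      rcases eq_or_ne x y₁ with rfl | hne
      · rw [if_pos rfl, if_neg (Finset.notMem_erase _ _), smul_zero]
      · rw [if_neg hne, if_pos (Finset.mem_erase.2 ⟨Ne.symm hne, hy⟩), smul_smul]
    rw [Finset.sum_congr rfl key, ← Finset.add_sum_erase _ _ hy, if_pos rfl, zero_add,
      Finset.smul_sum]
    rw [Finset.sum_ite_of_false (fun x hx => (Finset.mem_erase.1 hx).1), ← Finset.sum_add_distrib]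
    refine Finset.sum_eq_zero fun x hx => ?_
    obtain ⟨hne, hxF⟩ := Finset.mem_erase.1 hx
    rw [smul_smul, Finset.erase_right_comm, sign_id_ii hy hxF hne, neg_smul, neg_add_cancel]
  · rw [if_neg hy, map_zero, add_zero]
    refine Finset.sum_eq_zero fun x hx => ?_
    rw [map_smul, piM_bsingle K y₁ _ (erase_face hF hx),
      if_neg (fun hc => hy (Finset.erase_subset _ _ hc)), smul_zero]

/-- Identity (3): the cone identity relating `σ`, the boundaries, and the inclusion. -/
theorem sigma_bdry (K : SComplex V) (y₁ : V) (k : ℕ) :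
    (K.bdry (k + 1)).comp (sigmaM K y₁ (k + 1))
      + (sigmaM K y₁ k).comp ((K.link y₁).bdry k)
      = (jmap K y₁ (k + 1)).comp (iota K y₁ (k + 1)) := by
  refine Finsupp.lhom_ext' fun a => LinearMap.ext_ring ?_
  obtain ⟨G, hG⟩ := a
  have hyG : y₁ ∉ G := hG.1.2.1
  have hGD : G ∈ (K.del y₁).faces ∧ G.card = k + 1 := ⟨⟨hG.1.1, hyG⟩, hG.2⟩
  have hG' : insert y₁ G ∈ K.faces ∧ (insert y₁ G).card = k + 1 + 1 :=
    ⟨hG.1.2.2, by rw [Finset.card_insert_of_notMem hyG, hG.2]⟩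
  simp only [LinearMap.add_apply, LinearMap.comp_apply, lsingle_eq_bsingle hG]
  rw [sigmaM_bsingle K y₁ _ hG, iota_bsingle K y₁ _ hG, jmap_bsingle K y₁ _ hGD,
    map_smul, bdry_bsingle _ _ hG', bdry_bsingle _ _ hG, map_sum]
  have key2 : ∀ x ∈ G, (sigmaM K y₁ k) (sgn G x • bsingle (K.link y₁) k (G.erase x))
      = (sgn G x * sgn (insert y₁ (G.erase x)) y₁) • bsingle K (k + 1)
          (insert y₁ (G.erase x)) := by
    intro x hx
    rw [map_smul, sigmaM_bsingle K y₁ _ ⟨(K.link y₁).down_closed hG.1 (Finset.erase_subset _ _),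
      by simp [Finset.card_erase_of_mem hx, hG.2]⟩, smul_smul]
  rw [Finset.sum_congr rfl key2, Finset.sum_insert hyG, smul_add, smul_smul, sgn_sq, one_smul,
    Finset.erase_insert hyG, Finset.smul_sum]
  rw [add_assoc, ← Finset.sum_add_distrib]
  have hzero : (∑ x ∈ G, (sgn (insert y₁ G) y₁ • (sgn (insert y₁ G) x •
        bsingle K (k + 1) ((insert y₁ G).erase x))
      + (sgn G x * sgn (insert y₁ (G.erase x)) y₁) •
        bsingle K (k + 1) (insert y₁ (G.erase x)))) = 0 := by
    refine Finset.sum_eq_zero fun x hx => ?_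
    have hxy : x ≠ y₁ := fun h => hyG (h ▸ hx)
    rw [Finset.erase_insert_of_ne (Ne.symm hxy), smul_smul, sign_id_i hyG hx, neg_smul,
      neg_add_cancel]
  rw [hzero, add_zero]

/-- Identity (4): `π ∘ σ = id`. -/
theorem piM_sigmaM (K : SComplex V) (y₁ : V) (k : ℕ) :
    (piM K y₁ k).comp (sigmaM K y₁ k) = LinearMap.id := by
  refine Finsupp.lhom_ext' fun a => LinearMap.ext_ring ?_
  obtain ⟨G, hG⟩ := a
  have hyG : y₁ ∉ G := hG.1.2.1
  have hG' : insert y₁ G ∈ K.faces ∧ (insert y₁ G).card = k + 1 :=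
    ⟨hG.1.2.2, by rw [Finset.card_insert_of_notMem hyG, hG.2]⟩
  simp only [LinearMap.comp_apply, LinearMap.id_apply, lsingle_eq_bsingle hG]
  rw [sigmaM_bsingle K y₁ _ hG, map_smul, piM_bsingle K y₁ _ hG',
    if_pos (Finset.mem_insert_self _ _), Finset.erase_insert hyG, smul_smul, sgn_sq, one_smul]

/-- Identity (5): `π ∘ j = 0`. -/
theorem piM_jmap (K : SComplex V) (y₁ : V) (k : ℕ) :
    (piM K y₁ k).comp (jmap K y₁ (k + 1)) = 0 := by
  refine Finsupp.lhom_ext' fun a => LinearMap.ext_ring ?_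
  obtain ⟨F, hF⟩ := a
  simp only [LinearMap.comp_apply, LinearMap.zero_apply, lsingle_eq_bsingle hF]
  rw [jmap_bsingle K y₁ _ hF, piM_bsingle K y₁ _ ⟨hF.1.1, hF.2⟩, if_neg hF.1.2]

/-- Identity (6a): the boundary commutes with `j`. -/
theorem bdry_jmap (K : SComplex V) (y₁ : V) (k : ℕ) :
    (K.bdry k).comp (jmap K y₁ (k + 1)) = (jmap K y₁ k).comp ((K.del y₁).bdry k) := by
  refine Finsupp.lhom_ext' fun a => LinearMap.ext_ring ?_
  obtain ⟨F, hF⟩ := a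
  simp only [LinearMap.comp_apply, lsingle_eq_bsingle hF]
  rw [jmap_bsingle K y₁ _ hF, bdry_bsingle _ _ ⟨hF.1.1, hF.2⟩, bdry_bsingle _ _ hF, map_sum]
  refine Finset.sum_congr rfl fun x hx => ?_
  rw [map_smul, jmap_bsingle K y₁ _ (erase_face hF hx)]

/-- Identity (6b): the boundary commutes with `ι`. -/
theorem bdry_iota (K : SComplex V) (y₁ : V) (k : ℕ) :
    ((K.del y₁).bdry k).comp (iota K y₁ (k + 1)) = (iota K y₁ k).comp ((K.link y₁).bdry k) := by
  refine Finsupp.lhom_ext' fun a => LinearMap.ext_ring ?_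
  obtain ⟨F, hF⟩ := a
  simp only [LinearMap.comp_apply, lsingle_eq_bsingle hF]
  rw [iota_bsingle K y₁ _ hF, bdry_bsingle (K.del y₁) k ⟨⟨hF.1.1, hF.1.2.1⟩, hF.2⟩,
    bdry_bsingle _ _ hF, map_sum]
  refine Finset.sum_congr rfl fun x hx => ?_
  rw [map_smul, iota_bsingle K y₁ _ (erase_face hF hx)]

/-- Identity (7): `j ∘ ρ + σ ∘ π = id`. -/
theorem jmap_rhoM (K : SComplex V) (y₁ : V) (k : ℕ) :
    (jmap K y₁ (k + 1)).comp (rhoM K y₁ (k + 1))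
      + (sigmaM K y₁ k).comp (piM K y₁ k) = LinearMap.id := by
  refine Finsupp.lhom_ext' fun a => LinearMap.ext_ring ?_
  obtain ⟨F, hF⟩ := a
  simp only [LinearMap.add_apply, LinearMap.comp_apply, LinearMap.id_apply,
    lsingle_eq_bsingle hF]
  rw [rhoM_bsingle K y₁ _ hF, piM_bsingle K y₁ _ hF]
  by_cases hy : y₁ ∈ F
  · rw [if_pos hy, if_pos hy, map_zero, zero_add, map_smul,
      sigmaM_bsingle K y₁ _ ⟨erase_mem_L K y₁ hF.1 hy, by simp [Finset.card_erase_of_mem hy, hF.2]⟩,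
      Finset.insert_erase hy, smul_smul, sgn_sq, one_smul]
  · rw [if_neg hy, if_neg hy, map_zero, add_zero, jmap_bsingle K y₁ _ ⟨⟨hF.1, hy⟩, hF.2⟩]

/-- Identity (8): `ρ ∘ ∂ = ∂ ∘ ρ + ι ∘ π`. -/
theorem rhoM_bdry (K : SComplex V) (y₁ : V) (k : ℕ) :
    (rhoM K y₁ (k + 1)).comp (K.bdry (k + 1))
      = ((K.del y₁).bdry (k + 1)).comp (rhoM K y₁ (k + 2))
        + (iota K y₁ (k + 1)).comp (piM K y₁ (k + 1)) := by
  refine Finsupp.lhom_ext' fun a => LinearMap.ext_ring ?_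
  obtain ⟨F, hF⟩ := a
  simp only [LinearMap.add_apply, LinearMap.comp_apply, lsingle_eq_bsingle hF]
  rw [bdry_bsingle _ _ hF, rhoM_bsingle K y₁ _ hF, piM_bsingle K y₁ _ hF, map_sum]
  by_cases hy : y₁ ∈ F
  · rw [if_pos hy, if_pos hy, map_zero, zero_add, map_smul,
      iota_bsingle K y₁ _ ⟨erase_mem_L K y₁ hF.1 hy, by simp [Finset.card_erase_of_mem hy, hF.2]⟩]
    have key : ∀ x ∈ F, (rhoM K y₁ (k + 1)) (sgn F x • bsingle K (k + 1) (F.erase x))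
        = if x = y₁ then sgn F y₁ • bsingle (K.del y₁) (k + 1) (F.erase y₁) else 0 := by
      intro x hx
      rw [map_smul, rhoM_bsingle K y₁ _ (erase_face hF hx)]
      rcases eq_or_ne x y₁ with rfl | hne
      · rw [if_pos rfl, if_neg (Finset.notMem_erase _ _)]
      · rw [if_neg hne, if_pos (Finset.mem_erase.2 ⟨Ne.symm hne, hy⟩), smul_zero]
    rw [Finset.sum_congr rfl key, Finset.sum_ite_eq' F y₁ _, if_pos hy]
  · rw [if_neg hy, if_neg hy, map_zero, add_zero, bdry_bsingle (K.del y₁) (k+1) ⟨⟨hF.1, hy⟩, hF.2⟩]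
    refine Finset.sum_congr rfl fun x hx => ?_
    rw [map_smul, rhoM_bsingle K y₁ _ (erase_face hF hx),
      if_neg (fun hc => hy (Finset.erase_subset _ _ hc))]

end ConeTheory
theorem lapp {M N : Type*} [AddCommGroup M] [AddCommGroup N] [Module ℤ M] [Module ℤ N]
    {f g : M →ₗ[ℤ] N} (h : f = g) (x : M) : f x = g x := congrArg (fun φ => φ x) h

section HomologyAlg
variable (K : SComplex V) (y₁ : V) {y₂ : V}

/-- Part 2: if the deletion is a cone, its reduced homology vanishes. -/
theorem del_homology_subsingleton (hcone : (K.del y₁).IsConeWithApex y₂) (i : ℕ) :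
    Subsingleton ((K.del y₁).reducedHomology i) := by
  have key : (LinearMap.range ((K.del y₁).bdry (i + 1))).comap
      (LinearMap.ker ((K.del y₁).bdry i)).subtype = ⊤ := by
    rw [Submodule.eq_top_iff']
    intro z
    have hid : ((K.del y₁).bdry (i + 1)) ((hD K y₁ y₂ (i + 1)) (z : (K.del y₁).Chains (i + 1)))
        + (hD K y₁ y₂ i) (((K.del y₁).bdry i) (z : (K.del y₁).Chains (i + 1)))
        = (z : (K.del y₁).Chains (i + 1)) :=
      lapp (homotopy_id K y₁ hcone i) _
    rw [LinearMap.mem_ker.1 z.2, map_zero, add_zero] at hid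
    exact ⟨_, hid⟩
  exact (Submodule.Quotient.subsingleton_iff.2 key :)

/-- The cycle-level map induced by `π`. -/
noncomputable def fMap (i : ℕ) : LinearMap.ker (K.bdry (i + 1)) →ₗ[ℤ]
    LinearMap.ker ((K.link y₁).bdry i) :=
  LinearMap.codRestrict (LinearMap.ker ((K.link y₁).bdry i))
    ((piM K y₁ (i + 1)).comp (LinearMap.ker (K.bdry (i + 1))).subtype)
    (fun z => LinearMap.mem_ker.2 (by
      have h2 : (piM K y₁ i) ((K.bdry (i + 1)) (z : K.Chains (i + 1 + 1)))
          + ((K.link y₁).bdry i) ((piM K y₁ (i + 1)) (z : K.Chains (i + 1 + 1))) = 0 :=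
        lapp (piM_bdry K y₁ i) _
      rw [LinearMap.mem_ker.1 z.2, map_zero, zero_add] at h2
      simpa using h2))

theorem fMap_coe (i : ℕ) (z : LinearMap.ker (K.bdry (i + 1))) :
    (fMap K y₁ i z : (K.link y₁).Chains (i + 1))
      = piM K y₁ (i + 1) (z : K.Chains (i + 1 + 1)) := rfl

/-- The chain-level map `Φ = σ - j ∘ h_D ∘ ι`. -/
noncomputable def phiChain (i : ℕ) : (K.link y₁).Chains (i + 1) →ₗ[ℤ] K.Chains (i + 1 + 1) :=
  sigmaM K y₁ (i + 1) - (jmap K y₁ (i + 1 + 1)).comp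
    ((hD K y₁ y₂ (i + 1)).comp (iota K y₁ (i + 1)))

theorem bdry_phiChain (hcone : (K.del y₁).IsConeWithApex y₂) (i : ℕ)
    (c : (K.link y₁).Chains (i + 1)) (hc : ((K.link y₁).bdry i) c = 0) :
    K.bdry (i + 1) (phiChain K y₁ (y₂ := y₂) i c) = 0 := by
  have h3 : (K.bdry (i + 1)) ((sigmaM K y₁ (i + 1)) c)
      + (sigmaM K y₁ i) (((K.link y₁).bdry i) c)
      = (jmap K y₁ (i + 1)) ((iota K y₁ (i + 1)) c) := lapp (sigma_bdry K y₁ i) _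
  have h6b : ((K.del y₁).bdry i) ((iota K y₁ (i + 1)) c)
      = (iota K y₁ i) (((K.link y₁).bdry i) c) := lapp (bdry_iota K y₁ i) _
  have h1 : ((K.del y₁).bdry (i + 1)) ((hD K y₁ y₂ (i + 1)) ((iota K y₁ (i + 1)) c))
      + (hD K y₁ y₂ i) (((K.del y₁).bdry i) ((iota K y₁ (i + 1)) c))
      = (iota K y₁ (i + 1)) c := lapp (homotopy_id K y₁ hcone i) _
  have h6a : (K.bdry (i + 1)) ((jmap K y₁ (i + 1 + 1)) ((hD K y₁ y₂ (i + 1))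
        ((iota K y₁ (i + 1)) c)))
      = (jmap K y₁ (i + 1)) (((K.del y₁).bdry (i + 1)) ((hD K y₁ y₂ (i + 1))
        ((iota K y₁ (i + 1)) c))) := lapp (bdry_jmap K y₁ (i + 1)) _
  rw [hc, map_zero, add_zero] at h3
  rw [h6b, hc, map_zero, map_zero, add_zero] at h1
  simp only [phiChain, LinearMap.sub_apply, LinearMap.comp_apply, map_sub]
  rw [h3, h6a, h1, sub_self]

/-- The cycle-level map induced by `Φ`. -/
noncomputable def gMap (hcone : (K.del y₁).IsConeWithApex y₂) (i : ℕ) :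
    LinearMap.ker ((K.link y₁).bdry i) →ₗ[ℤ] LinearMap.ker (K.bdry (i + 1)) :=
  LinearMap.codRestrict (LinearMap.ker (K.bdry (i + 1)))
    ((phiChain K y₁ (y₂ := y₂) i).comp (LinearMap.ker ((K.link y₁).bdry i)).subtype)
    (fun c => LinearMap.mem_ker.2
      (bdry_phiChain K y₁ hcone i (c : (K.link y₁).Chains (i + 1)) (LinearMap.mem_ker.1 c.2)))

theorem gMap_coe (hcone : (K.del y₁).IsConeWithApex y₂) (i : ℕ)
    (c : LinearMap.ker ((K.link y₁).bdry i)) :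
    (gMap K y₁ hcone i c : K.Chains (i + 1 + 1))
      = phiChain K y₁ (y₂ := y₂) i (c : (K.link y₁).Chains (i + 1)) := rfl

theorem fMap_le (i : ℕ) :
    (LinearMap.range (K.bdry (i + 1 + 1))).comap (LinearMap.ker (K.bdry (i + 1))).subtype
    ≤ Submodule.comap (fMap K y₁ i)
      ((LinearMap.range ((K.link y₁).bdry (i + 1))).comap
        (LinearMap.ker ((K.link y₁).bdry i)).subtype) := by
  rintro z hz
  obtain ⟨w, hw⟩ := hz
  simp only [Submodule.mem_comap, Submodule.subtype_apply, LinearMap.mem_range] at hw ⊢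
  have h2 : (piM K y₁ (i + 1)) ((K.bdry (i + 1 + 1)) w)
      + ((K.link y₁).bdry (i + 1)) ((piM K y₁ (i + 1 + 1)) w) = 0 :=
    lapp (piM_bdry K y₁ (i + 1)) _
  refine ⟨-(piM K y₁ (i + 1 + 1) w), ?_⟩
  rw [map_neg, fMap_coe, ← hw]
  exact neg_eq_of_add_eq_zero_left h2

theorem gMap_le (hcone : (K.del y₁).IsConeWithApex y₂) (i : ℕ) :
    (LinearMap.range ((K.link y₁).bdry (i + 1))).comap
        (LinearMap.ker ((K.link y₁).bdry i)).subtype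
    ≤ Submodule.comap (gMap K y₁ hcone i)
      ((LinearMap.range (K.bdry (i + 1 + 1))).comap
        (LinearMap.ker (K.bdry (i + 1))).subtype) := by
  rintro c hc
  obtain ⟨w, hw⟩ := hc
  simp only [Submodule.mem_comap, Submodule.subtype_apply, LinearMap.mem_range] at hw ⊢
  have h3 : (K.bdry (i + 1 + 1)) ((sigmaM K y₁ (i + 1 + 1)) w)
      + (sigmaM K y₁ (i + 1)) (((K.link y₁).bdry (i + 1)) w)
      = (jmap K y₁ (i + 1 + 1)) ((iota K y₁ (i + 1 + 1)) w) := lapp (sigma_bdry K y₁ (i + 1)) _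
  have h6b : ((K.del y₁).bdry (i + 1)) ((iota K y₁ (i + 1 + 1)) w)
      = (iota K y₁ (i + 1)) (((K.link y₁).bdry (i + 1)) w) := lapp (bdry_iota K y₁ (i + 1)) _
  have h1 : ((K.del y₁).bdry (i + 1 + 1)) ((hD K y₁ y₂ (i + 1 + 1)) ((iota K y₁ (i + 1 + 1)) w))
      + (hD K y₁ y₂ (i + 1)) (((K.del y₁).bdry (i + 1)) ((iota K y₁ (i + 1 + 1)) w))
      = (iota K y₁ (i + 1 + 1)) w := lapp (homotopy_id K y₁ hcone (i + 1)) _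
  have h6a : (K.bdry (i + 1 + 1)) ((jmap K y₁ (i + 1 + 1 + 1)) ((hD K y₁ y₂ (i + 1 + 1))
        ((iota K y₁ (i + 1 + 1)) w)))
      = (jmap K y₁ (i + 1 + 1)) (((K.del y₁).bdry (i + 1 + 1)) ((hD K y₁ y₂ (i + 1 + 1))
        ((iota K y₁ (i + 1 + 1)) w))) := lapp (bdry_jmap K y₁ (i + 1 + 1)) _
  have e1 : (sigmaM K y₁ (i + 1)) (((K.link y₁).bdry (i + 1)) w)
      = (jmap K y₁ (i + 1 + 1)) ((iota K y₁ (i + 1 + 1)) w)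
        - (K.bdry (i + 1 + 1)) ((sigmaM K y₁ (i + 1 + 1)) w) := eq_sub_of_add_eq' h3
  have e3 : (hD K y₁ y₂ (i + 1)) (((K.del y₁).bdry (i + 1)) ((iota K y₁ (i + 1 + 1)) w))
      = (iota K y₁ (i + 1 + 1)) w
        - ((K.del y₁).bdry (i + 1 + 1)) ((hD K y₁ y₂ (i + 1 + 1)) ((iota K y₁ (i + 1 + 1)) w)) :=
    eq_sub_of_add_eq' h1
  refine ⟨(jmap K y₁ (i + 1 + 1 + 1)) ((hD K y₁ y₂ (i + 1 + 1)) ((iota K y₁ (i + 1 + 1)) w))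
    - (sigmaM K y₁ (i + 1 + 1)) w, ?_⟩
  rw [map_sub, gMap_coe, ← hw]
  simp only [phiChain, LinearMap.sub_apply, LinearMap.comp_apply]
  rw [e1, h6a, ← h6b, e3, map_sub]
  abel

theorem fMap_gMap (hcone : (K.del y₁).IsConeWithApex y₂) (i : ℕ)
    (c : LinearMap.ker ((K.link y₁).bdry i)) :
    fMap K y₁ i (gMap K y₁ hcone i c) = c := by
  apply Subtype.ext
  rw [fMap_coe, gMap_coe]
  have h4 : (piM K y₁ (i + 1)) ((sigmaM K y₁ (i + 1)) (c : (K.link y₁).Chains (i + 1)))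
      = (c : (K.link y₁).Chains (i + 1)) := lapp (piM_sigmaM K y₁ (i + 1)) _
  have h5 : (piM K y₁ (i + 1)) ((jmap K y₁ (i + 1 + 1)) ((hD K y₁ y₂ (i + 1))
        ((iota K y₁ (i + 1)) (c : (K.link y₁).Chains (i + 1))))) = 0 :=
    lapp (piM_jmap K y₁ (i + 1)) _
  simp only [phiChain, LinearMap.sub_apply, LinearMap.comp_apply, map_sub, h4, h5, sub_zero]

theorem gMap_fMap (hcone : (K.del y₁).IsConeWithApex y₂) (i : ℕ)
    (z : LinearMap.ker (K.bdry (i + 1))) :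
    (z : K.Chains (i + 1 + 1)) - (gMap K y₁ hcone i (fMap K y₁ i z) : K.Chains (i + 1 + 1))
      ∈ LinearMap.range (K.bdry (i + 1 + 1)) := by
  have hz : (K.bdry (i + 1)) (z : K.Chains (i + 1 + 1)) = 0 := LinearMap.mem_ker.1 z.2
  have h7 : (jmap K y₁ (i + 1 + 1)) ((rhoM K y₁ (i + 1 + 1)) (z : K.Chains (i + 1 + 1)))
      + (sigmaM K y₁ (i + 1)) ((piM K y₁ (i + 1)) (z : K.Chains (i + 1 + 1)))
      = (z : K.Chains (i + 1 + 1)) := lapp (jmap_rhoM K y₁ (i + 1)) _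
  have h8 : (rhoM K y₁ (i + 1)) ((K.bdry (i + 1)) (z : K.Chains (i + 1 + 1)))
      = ((K.del y₁).bdry (i + 1)) ((rhoM K y₁ (i + 1 + 1)) (z : K.Chains (i + 1 + 1)))
        + (iota K y₁ (i + 1)) ((piM K y₁ (i + 1)) (z : K.Chains (i + 1 + 1))) :=
    lapp (rhoM_bdry K y₁ i) _
  have h1 : ((K.del y₁).bdry (i + 1 + 1)) ((hD K y₁ y₂ (i + 1 + 1))
        ((rhoM K y₁ (i + 1 + 1)) (z : K.Chains (i + 1 + 1))))
      + (hD K y₁ y₂ (i + 1)) (((K.del y₁).bdry (i + 1))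
        ((rhoM K y₁ (i + 1 + 1)) (z : K.Chains (i + 1 + 1))))
      = (rhoM K y₁ (i + 1 + 1)) (z : K.Chains (i + 1 + 1)) :=
    lapp (homotopy_id K y₁ hcone (i + 1)) _
  have h6a : (K.bdry (i + 1 + 1)) ((jmap K y₁ (i + 1 + 1 + 1)) ((hD K y₁ y₂ (i + 1 + 1))
        ((rhoM K y₁ (i + 1 + 1)) (z : K.Chains (i + 1 + 1)))))
      = (jmap K y₁ (i + 1 + 1)) (((K.del y₁).bdry (i + 1 + 1)) ((hD K y₁ y₂ (i + 1 + 1))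
        ((rhoM K y₁ (i + 1 + 1)) (z : K.Chains (i + 1 + 1))))) :=
    lapp (bdry_jmap K y₁ (i + 1 + 1)) _
  rw [hz, map_zero] at h8
  have hιπ : (iota K y₁ (i + 1)) ((piM K y₁ (i + 1)) (z : K.Chains (i + 1 + 1)))
      = -((K.del y₁).bdry (i + 1)) ((rhoM K y₁ (i + 1 + 1)) (z : K.Chains (i + 1 + 1))) :=
    eq_neg_of_add_eq_zero_right h8.symm
  have e3 : (hD K y₁ y₂ (i + 1)) (((K.del y₁).bdry (i + 1))
        ((rhoM K y₁ (i + 1 + 1)) (z : K.Chains (i + 1 + 1))))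
      = (rhoM K y₁ (i + 1 + 1)) (z : K.Chains (i + 1 + 1))
        - ((K.del y₁).bdry (i + 1 + 1)) ((hD K y₁ y₂ (i + 1 + 1))
          ((rhoM K y₁ (i + 1 + 1)) (z : K.Chains (i + 1 + 1)))) := eq_sub_of_add_eq' h1
  have e7 : (sigmaM K y₁ (i + 1)) ((piM K y₁ (i + 1)) (z : K.Chains (i + 1 + 1)))
      = (z : K.Chains (i + 1 + 1))
        - (jmap K y₁ (i + 1 + 1)) ((rhoM K y₁ (i + 1 + 1)) (z : K.Chains (i + 1 + 1))) :=
    eq_sub_of_add_eq' h7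
  refine ⟨(jmap K y₁ (i + 1 + 1 + 1)) ((hD K y₁ y₂ (i + 1 + 1))
    ((rhoM K y₁ (i + 1 + 1)) (z : K.Chains (i + 1 + 1)))), ?_⟩
  rw [h6a, gMap_coe]
  simp only [phiChain, LinearMap.sub_apply, LinearMap.comp_apply]
  rw [fMap_coe, hιπ, map_neg, map_neg, e3, map_sub, e7]
  abel

/-- Part 3: the homology shift isomorphism. -/
noncomputable def homologyShift (hcone : (K.del y₁).IsConeWithApex y₂) (i : ℕ) :
    K.reducedHomology (i + 1) ≃ₗ[ℤ] (K.link y₁).reducedHomology i := by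
  refine LinearEquiv.ofLinear
    (Submodule.mapQ _ _ (fMap K y₁ i) (fMap_le K y₁ i))
    (Submodule.mapQ _ _ (gMap K y₁ hcone i) (gMap_le K y₁ hcone i)) ?_ ?_
  · refine LinearMap.ext fun x => ?_
    obtain ⟨c, rfl⟩ := Submodule.Quotient.mk_surjective _ x
    erw [LinearMap.comp_apply, Submodule.mapQ_apply]
    rw [fMap_gMap K y₁ hcone i c]
    rfl
  · refine LinearMap.ext fun x => ?_
    obtain ⟨z, rfl⟩ := Submodule.Quotient.mk_surjective _ x
    erw [LinearMap.comp_apply, Submodule.mapQ_apply]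
    show _ = Submodule.Quotient.mk z
    rw [Submodule.Quotient.eq]
    have := neg_mem (gMap_fMap K y₁ hcone i z)
    rw [neg_sub] at this
    simpa [Submodule.mem_comap, Submodule.subtype_apply] using this

end HomologyAlg


end SRproof


/-- Let `Δ` be the Stanley–Reisner complex of a squarefree monomial
ideal `I` with minimal (squarefree) generators `Gens`, containing the generator
`Y = {y₁, …, y_t}` with `t ≥ 2`, and suppose every generator containing `y₂` also
contains `y₁`. Then for every `τ ⊇ Y`, the deletion of `y₁` from `Δ|_τ` is a cone
over `y₂`; in particular it has vanishing reduced homology, and hence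
`H̃_{i+1}(Δ|_τ; ℤ) ≅ H̃_i(link_{Δ|_τ}(y₁); ℤ)` for all `i ≥ 0`. -/
theorem del_is_cone_and_homology_shift {V : Type*} [LinearOrder V]
    (Gens : Finset (Finset V)) (Y : Finset V) (y₁ y₂ : V)
    (h12 : y₁ ≠ y₂) (hy₁ : y₁ ∈ Y) (hy₂ : y₂ ∈ Y) (ht : 2 ≤ Y.card)
    (hYgen : Y ∈ Gens)
    (hmin : ∀ g ∈ Gens, ∀ g' ∈ Gens, g ⊆ g' → g = g')
    (hdiv : ∀ g ∈ Gens, y₂ ∈ g → y₁ ∈ g)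
    (τ : Finset V) (hτ : Y ⊆ τ) :
    (((SRcomplex Gens).restrict τ).del y₁).IsConeWithApex y₂ ∧
    (∀ i : ℕ, Subsingleton ((((SRcomplex Gens).restrict τ).del y₁).reducedHomology i)) ∧
    (∀ i : ℕ, Nonempty (((SRcomplex Gens).restrict τ).reducedHomology (i + 1) ≃ₗ[ℤ]
      (((SRcomplex Gens).restrict τ).link y₁).reducedHomology i)) := by
  have hcone : (((SRcomplex Gens).restrict τ).del y₁).IsConeWithApex y₂ := by
    intro F hF
    obtain ⟨⟨hSR, hsub⟩, hy1⟩ := hF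
    refine ⟨⟨?_, Finset.insert_subset (hτ hy₂) hsub⟩, ?_⟩
    · intro g hg hsubg
      by_cases hy2g : y₂ ∈ g
      · have h1g : y₁ ∈ insert y₂ F := hsubg (hdiv g hg hy2g)
        rcases Finset.mem_insert.1 h1g with h | h
        · exact h12 h
        · exact hy1 h
      · exact hSR g hg ((Finset.subset_insert_iff_of_notMem hy2g).1 hsubg)
    · intro hmem
      rcases Finset.mem_insert.1 hmem with h | h
      · exact h12 h
      · exact hy1 h
  exact ⟨hcone, fun i => SRproof.del_homology_subsingleton _ y₁ hcone i,
    fun i => ⟨SRproof.homologyShift _ y₁ hcone i⟩⟩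
end

section
/- A squarefree monomial ideal I in k[V] of height c is the polarization of a primary monomial ideal if and only if there is a partition V = ⨆_{i=1}^c {x_{i,1},…,x_{i,n_i}} such that for every i and every minimal generator f of I, if x_{i,j} divides f for some j then x_{i,k} divides f for all k ≤ j. -/
variable {V : Type*} [Fintype V] [DecidableEq V]

/-- The polarization of the monomial with exponent vector `g : Fin c → ℕ`,
as a subset of the polarized variables: `{x_{i,j} : j < g i}`. -/
def polSupp {c : ℕ} (n : Fin c → ℕ) (g : Fin c → ℕ) :
    Finset ((i : Fin c) × Fin (n i)) :=
  Finset.univ.filter fun v => (v.2 : ℕ) < g v.1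

/-- `gens` (the minimal generators of a squarefree monomial ideal on the vertex
set `V`) is the polarization of a primary monomial ideal: there is an
identification of `V` with a set of polarized variables `x_{i,j}` (`1 ≤ i ≤ c'`,
`1 ≤ j ≤ n_i`) under which `gens` is the polarization of the set `A` of minimal
generators of a monomial ideal in `c'` variables that is primary to the maximal
ideal (each variable admits a pure power among the generators). -/
def IsPolarizationOfPrimary (gens : Finset (Finset V)) : Prop :=
  ∃ (c' : ℕ) (n : Fin c' → ℕ) (e : V ≃ ((i : Fin c') × Fin (n i)))
    (A : Finset (Fin c' → ℕ)),
      (∀ g ∈ A, ∀ i, g i ≤ n i) ∧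
      (∀ g ∈ A, g ≠ 0) ∧
      (∀ g ∈ A, ∀ g' ∈ A, g ≤ g' → g = g') ∧
      (∀ i, ∃ g ∈ A, (∀ j, j ≠ i → g j = 0) ∧ g i ≠ 0) ∧
      gens = A.image fun g => (polSupp n g).image e.symm

lemma mem_polSupp {c : ℕ} {n g : Fin c → ℕ} {x : (i : Fin c) × Fin (n i)} :
    x ∈ polSupp n g ↔ (x.2 : ℕ) < g x.1 := by
  simp [polSupp]

lemma sigma_fin_eq {c : ℕ} {n : Fin c → ℕ} {x y : (i : Fin c) × Fin (n i)}
    (h1 : x.1 = y.1) (h2 : (x.2 : ℕ) = (y.2 : ℕ)) : x = y :=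
  Sigma.ext h1 ((Fin.heq_ext_iff (by rw [h1])).2 h2)

lemma downclosed_mem_iff {m : ℕ} (S : Finset (Fin m))
    (hS : ∀ j k : Fin m, k ≤ j → j ∈ S → k ∈ S) (j : Fin m) :
    j ∈ S ↔ (j : ℕ) < S.card := by
  constructor
  · intro hj
    have hsub : Finset.Iic j ⊆ S := fun k hk => hS j k (Finset.mem_Iic.mp hk) hj
    have h1 := Finset.card_le_card hsub
    rw [Fin.card_Iic] at h1
    omega
  · intro hj
    by_contra hjS
    have hsub : S ⊆ Finset.Iio j := fun k hk =>
      Finset.mem_Iio.mpr (lt_of_not_ge fun h => hjS (hS k j h hk))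
    have h1 := Finset.card_le_card hsub
    rw [Fin.card_Iio] at h1
    omega

lemma mem_image_symm {α β : Type*} [DecidableEq α] (e : α ≃ β) (s : Finset β) (x : β) :
    e.symm x ∈ s.image e.symm ↔ x ∈ s := by
  rw [Finset.mem_image]
  constructor
  · rintro ⟨a, ha, hax⟩
    rwa [e.symm.injective hax] at ha
  · intro hx; exact ⟨x, hx, rfl⟩

lemma mem_image_symm' {α β : Type*} [DecidableEq α] (e : α ≃ β) (s : Finset β) (v : α) :
    v ∈ s.image e.symm ↔ e v ∈ s := by
  conv_lhs => rw [show v = e.symm (e v) from (e.symm_apply_apply v).symm]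
  exact mem_image_symm e s (e v)

/-- A squarefree monomial ideal of height `c`, with minimal
generators `gens`, is the polarization of a primary monomial ideal iff there is a
partition `V = ⨆_{i=1}^c {x_{i,1}, …, x_{i,n_i}}` such that every minimal generator
containing `x_{i,j}` contains `x_{i,k}` for all `k ≤ j`. -/
theorem polarization_of_primary_iff_staircase_partition
    (gens : Finset (Finset V))
    (hne : ∀ g ∈ gens, g.Nonempty)
    (hmin : ∀ g ∈ gens, ∀ g' ∈ gens, g ⊆ g' → g = g')
    (c : ℕ)
    (hheight₁ : ∃ C : Finset V, (∀ g ∈ gens, (g ∩ C).Nonempty) ∧ C.card = c)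
    (hheight₂ : ∀ C : Finset V, (∀ g ∈ gens, (g ∩ C).Nonempty) → c ≤ C.card) :
    IsPolarizationOfPrimary gens ↔
      ∃ (n : Fin c → ℕ) (e : V ≃ ((i : Fin c) × Fin (n i))),
        ∀ f ∈ gens, ∀ (i : Fin c) (j k : Fin (n i)), k ≤ j →
          e.symm ⟨i, j⟩ ∈ f → e.symm ⟨i, k⟩ ∈ f := by
  classical
  constructor
  · rintro ⟨c', n, e, A, h1, h2, h3, h4, h5⟩
    have npos : ∀ i, 0 < n i := by
      intro i
      obtain ⟨g, hg, -, hgi⟩ := h4 i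
      have := h1 g hg i
      omega
    have hc' : c' = c := by
      have hle1 : c ≤ c' := by
        set C' : Finset V :=
          Finset.univ.image (fun i : Fin c' => e.symm ⟨i, ⟨0, npos i⟩⟩) with hC'
        have hcover : ∀ f ∈ gens, (f ∩ C').Nonempty := by
          intro f hf
          rw [h5, Finset.mem_image] at hf
          obtain ⟨g, hg, rfl⟩ := hf
          have hg0 := h2 g hg
          have hex : ∃ i, g i ≠ 0 := by
            by_contra h
            push_neg at h
            exact hg0 (funext fun i => h i)
          obtain ⟨i, hi⟩ := hex
          refine ⟨e.symm ⟨i, ⟨0, npos i⟩⟩, Finset.mem_inter.mpr ⟨?_, ?_⟩⟩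
          · rw [mem_image_symm, mem_polSupp]
            simpa using Nat.pos_of_ne_zero hi
          · exact Finset.mem_image.mpr ⟨i, Finset.mem_univ i, rfl⟩
        have hcard : C'.card = c' := by
          rw [hC', Finset.card_image_of_injective _ ?_, Finset.card_univ, Fintype.card_fin]
          intro a b hab
          exact congrArg Sigma.fst (e.symm.injective hab)
        calc c ≤ C'.card := hheight₂ C' hcover
          _ = c' := hcard
      have hle2 : c' ≤ c := by
        obtain ⟨C, hCcov, hCcard⟩ := hheight₁
        have key : ∀ i : Fin c', ∃ v, v ∈ C ∧ (e v).1 = i := by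
          intro i
          obtain ⟨g, hg, hgj, hgi⟩ := h4 i
          have hfmem : (polSupp n g).image e.symm ∈ gens := by
            rw [h5]; exact Finset.mem_image_of_mem _ hg
          obtain ⟨v, hv⟩ := hCcov _ hfmem
          rw [Finset.mem_inter] at hv
          obtain ⟨hv1, hv2⟩ := hv
          rw [mem_image_symm', mem_polSupp] at hv1
          refine ⟨v, hv2, ?_⟩
          by_contra hvi
          rw [hgj (e v).1 hvi] at hv1
          omega
        have h := Finset.card_le_card_of_injOn (s := (Finset.univ : Finset (Fin c'))) (t := C) (fun i : Fin c' => (key i).choose)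
          (fun i _ => ((key i).choose_spec).1)
          (fun i _ j _ hij => by
            have hi := ((key i).choose_spec).2
            have hjj := ((key j).choose_spec).2
            have hc := congrArg (fun v => (e v).1) hij
            dsimp only at hc
            rw [hi, hjj] at hc
            exact hc)
        rw [Finset.card_univ, Fintype.card_fin, hCcard] at h
        exact h
      omega
    subst hc'
    refine ⟨n, e, ?_⟩
    intro f hf i j k hkj hj
    rw [h5, Finset.mem_image] at hf
    obtain ⟨g, hg, rfl⟩ := hf
    rw [mem_image_symm, mem_polSupp] at hj ⊢
    have hkj' : (k : ℕ) ≤ (j : ℕ) := hkj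
    exact lt_of_le_of_lt hkj' hj
  · rintro ⟨n, e, hst⟩
    set gf : Finset V → Fin c → ℕ :=
      fun f i => (Finset.univ.filter (fun j : Fin (n i) => e.symm ⟨i, j⟩ ∈ f)).card with hgf
    have hmemiff : ∀ f ∈ gens, ∀ (i : Fin c) (j : Fin (n i)),
        e.symm ⟨i, j⟩ ∈ f ↔ (j : ℕ) < gf f i := by
      intro f hf i j
      have := downclosed_mem_iff
        (Finset.univ.filter (fun j : Fin (n i) => e.symm ⟨i, j⟩ ∈ f))
        (fun j' k' hk hj' => by
          simp only [Finset.mem_filter, Finset.mem_univ, true_and] at *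
          exact hst f hf i j' k' hk hj') j
      simpa [hgf] using this
    have hrec : ∀ f ∈ gens, f = (polSupp n (gf f)).image e.symm := by
      intro f hf
      ext v
      rw [mem_image_symm' e, mem_polSupp, ← hmemiff f hf (e v).1 (e v).2,
        Sigma.eta, Equiv.symm_apply_apply]
    refine ⟨c, n, e, gens.image gf, ?_, ?_, ?_, ?_, ?_⟩
    · rintro g hg i
      rw [Finset.mem_image] at hg
      obtain ⟨f, hf, rfl⟩ := hg
      simp only [hgf]
      calc (Finset.univ.filter (fun j : Fin (n i) => e.symm ⟨i, j⟩ ∈ f)).card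
          ≤ (Finset.univ : Finset (Fin (n i))).card :=
            Finset.card_le_card (Finset.filter_subset _ _)
        _ = n i := by simp
    · rintro g hg h0
      rw [Finset.mem_image] at hg
      obtain ⟨f, hf, rfl⟩ := hg
      obtain ⟨v, hv⟩ := hne f hf
      have h1 := (hmemiff f hf (e v).1 (e v).2).1
        (by rw [Sigma.eta, Equiv.symm_apply_apply]; exact hv)
      have h2 : gf f (e v).1 = 0 := congrFun h0 (e v).1
      omega
    · rintro g hg g' hg' hle
      rw [Finset.mem_image] at hg hg'
      obtain ⟨f, hf, rfl⟩ := hg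
      obtain ⟨f', hf', rfl⟩ := hg'
      have hsub : f ⊆ f' := by
        intro v hv
        have h1 := (hmemiff f hf (e v).1 (e v).2).1
          (by rw [Sigma.eta, Equiv.symm_apply_apply]; exact hv)
        have h2 : ((e v).2 : ℕ) < gf f' (e v).1 := lt_of_lt_of_le h1 (hle (e v).1)
        have := (hmemiff f' hf' (e v).1 (e v).2).2 h2
        rwa [Sigma.eta, Equiv.symm_apply_apply] at this
      rw [hmin f hf f' hf' hsub]
    · intro i₀
      have key : ∃ f ∈ gens, ∀ v ∈ f, (e v).1 = i₀ := by
        by_contra hcon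
        push_neg at hcon
        set C : Finset V :=
          Finset.univ.filter (fun v => (e v).1 ≠ i₀ ∧ ((e v).2 : ℕ) = 0) with hC
        have hcov : ∀ f ∈ gens, (f ∩ C).Nonempty := by
          intro f hf
          obtain ⟨v, hv, hvi⟩ := hcon f hf
          have hj : e.symm ⟨(e v).1, (e v).2⟩ ∈ f := by
            rw [Sigma.eta, Equiv.symm_apply_apply]; exact hv
          have hw := hst f hf (e v).1 (e v).2 ⟨0, (e v).2.pos⟩
            (by simp [Fin.le_def]) hj
          refine ⟨e.symm ⟨(e v).1, ⟨0, (e v).2.pos⟩⟩, Finset.mem_inter.mpr ⟨hw, ?_⟩⟩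
          rw [hC, Finset.mem_filter]
          refine ⟨Finset.mem_univ _, ?_⟩
          rw [Equiv.apply_symm_apply]
          exact ⟨hvi, rfl⟩
        have hcard : C.card ≤ c - 1 := by
          have hle : C.card ≤ (Finset.univ.erase i₀).card := by
            apply Finset.card_le_card_of_injOn (fun v => (e v).1)
            · intro v hv
              rw [hC, Finset.mem_coe, Finset.mem_filter] at hv
              exact Finset.mem_erase.mpr ⟨hv.2.1, Finset.mem_univ _⟩
            · intro v hv w hw h1
              simp only [hC, Finset.coe_filter, Set.mem_setOf_eq, Finset.mem_univ,
                true_and] at hv hw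
              refine e.injective (sigma_fin_eq h1 ?_)
              rw [hv.2, hw.2]
          rwa [Finset.card_erase_of_mem (Finset.mem_univ i₀), Finset.card_univ,
            Fintype.card_fin] at hle
        have hcc := hheight₂ C hcov
        have hc0 : 0 < c := i₀.pos
        omega
      obtain ⟨f, hf, hfi⟩ := key
      refine ⟨gf f, Finset.mem_image_of_mem _ hf, ?_, ?_⟩
      · intro j hj
        simp only [hgf]
        rw [Finset.card_eq_zero, Finset.filter_eq_empty_iff]
        intro k _ hk
        have := hfi _ hk
        rw [Equiv.apply_symm_apply] at this
        exact hj this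
      · obtain ⟨v, hv⟩ := hne f hf
        have h1 := (hmemiff f hf (e v).1 (e v).2).1
          (by rw [Sigma.eta, Equiv.symm_apply_apply]; exact hv)
        have h2 : 0 < gf f (e v).1 := lt_of_le_of_lt (Nat.zero_le _) h1
        rw [hfi v hv] at h2
        omega
    · rw [Finset.image_image]
      conv_lhs => rw [show gens = gens.image id from (Finset.image_id).symm]
      apply Finset.image_congr
      intro f hf
      exact hrec f hf
end

section
/- Let I = (x_i y_j : 1 ≤ j ≤ m, x_i ∈ G_j) be a bipartite quadratic monomial ideal in R = k[x₁,…,x_n, y₁,…,y_m] determined by subsets G₁,…,G_m ⊆ {x₁,…,x_n}, and let J = ( ∏_{x_i ∈ F} x_i : F ⊆ {x₁,…,x_n}, F ∩ G_j ≠ ∅ for all j ). Then I = (I + J) ∩ (y₁,…,y_m). -/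
open MvPolynomial

lemma prod_X_eq_monomial' {n m : ℕ} {k : Type*} [Field k] (F : Finset (Fin n)) :
    (∏ i ∈ F, X (Sum.inl i) : MvPolynomial (Fin n ⊕ Fin m) k)
      = monomial (∑ i ∈ F, Finsupp.single (Sum.inl i) 1) 1 := by
  classical
  induction F using Finset.induction with
  | empty => simp [monomial_zero']
  | insert _ _ h ih =>
      rw [Finset.prod_insert h, Finset.sum_insert h, ih, X, monomial_mul, one_mul]

/-- Let `I = (x_i y_j : x_i ∈ G_j)` be a bipartite quadratic
monomial ideal in `k[x₁, …, x_n, y₁, …, y_m]` and let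
`J = (∏_{x_i ∈ F} x_i : F ∩ G_j ≠ ∅ for all j)` be the ideal of transversal
monomials.  Then `I = (I + J) ∩ (y₁, …, y_m)`. -/
theorem bipartite_ideal_eq_intersection {n m : ℕ} (k : Type*) [Field k]
    (G : Fin m → Finset (Fin n))
    (I J : Ideal (MvPolynomial (Fin n ⊕ Fin m) k))
    (hI : I = Ideal.span
      {p | ∃ i j, i ∈ G j ∧ p = X (Sum.inl i) * X (Sum.inr j)})
    (hJ : J = Ideal.span
      {p | ∃ F : Finset (Fin n), (∀ j, ∃ i ∈ F, i ∈ G j) ∧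
        p = ∏ i ∈ F, X (Sum.inl i)}) :
    I = (I ⊔ J) ⊓ Ideal.span {p | ∃ j, p = (X (Sum.inr j) :
      MvPolynomial (Fin n ⊕ Fin m) k)} := by
  classical
  set Y : Ideal (MvPolynomial (Fin n ⊕ Fin m) k) :=
    Ideal.span {p | ∃ j, p = (X (Sum.inr j) : MvPolynomial (Fin n ⊕ Fin m) k)} with hY
  -- rewrite the three generating sets as images of monomial exponent sets
  have hIset : {p : MvPolynomial (Fin n ⊕ Fin m) k |
      ∃ i j, i ∈ G j ∧ p = X (Sum.inl i) * X (Sum.inr j)} =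
      (fun d => monomial d (1:k)) '' {d | ∃ i j, i ∈ G j ∧
        d = Finsupp.single (Sum.inl i) 1 + Finsupp.single (Sum.inr j) 1} := by
    ext p
    constructor
    · rintro ⟨i, j, h, rfl⟩
      exact ⟨_, ⟨i, j, h, rfl⟩, by rw [X, X, monomial_mul, one_mul]⟩
    · rintro ⟨d, ⟨i, j, h, rfl⟩, rfl⟩
      exact ⟨i, j, h, by rw [X, X, monomial_mul, one_mul]⟩
  have hJset : {p : MvPolynomial (Fin n ⊕ Fin m) k |
      ∃ F : Finset (Fin n), (∀ j, ∃ i ∈ F, i ∈ G j) ∧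
        p = ∏ i ∈ F, X (Sum.inl i)} =
      (fun d => monomial d (1:k)) '' {d | ∃ F : Finset (Fin n),
        (∀ j, ∃ i ∈ F, i ∈ G j) ∧ d = ∑ i ∈ F, Finsupp.single (Sum.inl i) 1} := by
    ext p
    constructor
    · rintro ⟨F, h, rfl⟩
      exact ⟨_, ⟨F, h, rfl⟩, (prod_X_eq_monomial' F).symm⟩
    · rintro ⟨d, ⟨F, h, rfl⟩, rfl⟩
      exact ⟨F, h, (prod_X_eq_monomial' F).symm⟩
  have hYset : {p : MvPolynomial (Fin n ⊕ Fin m) k | ∃ j, p = X (Sum.inr j)} =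
      (fun d => monomial d (1:k)) '' {d | ∃ j : Fin m,
        d = Finsupp.single (Sum.inr j) 1} := by
    ext p
    constructor
    · rintro ⟨j, rfl⟩; exact ⟨_, ⟨j, rfl⟩, rfl⟩
    · rintro ⟨d, ⟨j, rfl⟩, rfl⟩; exact ⟨j, rfl⟩
  -- I ≤ Y
  have hIY : I ≤ Y := by
    rw [hI, Ideal.span_le]
    rintro p ⟨i, j, hij, rfl⟩
    exact Ideal.mul_mem_left _ _ (Ideal.subset_span ⟨j, rfl⟩)
  -- key: J ⊓ Y ≤ I
  have key : ∀ q : MvPolynomial (Fin n ⊕ Fin m) k, q ∈ J → q ∈ Y → q ∈ I := by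
    intro q hqJ hqY
    rw [hJ, hJset, mem_ideal_span_monomial_image] at hqJ
    rw [hY, hYset, mem_ideal_span_monomial_image] at hqY
    rw [hI, hIset, mem_ideal_span_monomial_image]
    intro d hd
    obtain ⟨sF, ⟨F, hF, rfl⟩, hFle⟩ := hqJ d hd
    obtain ⟨sy, ⟨j, rfl⟩, hyle⟩ := hqY d hd
    obtain ⟨i, hiF, hiG⟩ := hF j
    refine ⟨_, ⟨i, j, hiG, rfl⟩, ?_⟩
    intro a
    have h1 : (Finsupp.single (Sum.inl i) 1 : (Fin n ⊕ Fin m) →₀ ℕ) a ≤ d a := by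
      refine le_trans ?_ (hFle a)
      rw [Finset.sum_apply']
      exact Finset.single_le_sum (f := fun i' => (Finsupp.single (Sum.inl i') 1 : (Fin n ⊕ Fin m) →₀ ℕ) a) (fun _ _ => Nat.zero_le _) hiF
    have h2 : (Finsupp.single (Sum.inr j) 1 : (Fin n ⊕ Fin m) →₀ ℕ) a ≤ d a := hyle a
    rw [Finsupp.add_apply]
    cases a with
    | inl a => simpa [Finsupp.single_apply] using h1
    | inr b => simpa [Finsupp.single_apply] using h2
  refine le_antisymm (le_inf le_sup_left hIY) ?_
  rintro p ⟨hpIJ, hpY⟩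
  obtain ⟨a, haI, b, hbJ, rfl⟩ := Submodule.mem_sup.mp hpIJ
  have hbY : b ∈ Y := by
    have : a + b - a ∈ Y := Y.sub_mem hpY (hIY haI)
    simpa using this
  exact I.add_mem haI (key b hbJ hbY)
end
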